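/- Let 0<q<1 and 0≤β≤1/q. Then, as x↓0 through positive real values, ₂φ₁(iq√β x, −iq√β x; −x²q; q, 1/z) → 1/(1/z;q)_∞ and ₂φ₁(iq√β/x, −iq√β/x; −q/x²; q, 1/z) → (−βq/z;q)_∞, and in both cases the convergence is uniform for z in compact subsets of {z∈ℂ : |z|>1}. -/

import Mathlib

open scoped BigOperators Topology

noncomputable section

/-- finite q-Pochhammer symbol `(a;q)_n` (complex). -/
def qPoch (a q : ℂ) (n : ℕ) : ℂ := ∏ j ∈ Finset.range n, (1 - a * q ^ j)

/-- infinite q-Pochhammer symbol `(a;q)_∞` (complex). -/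
def qPochInf (a q : ℂ) : ℂ := ∏' j : ℕ, (1 - a * q ^ j)

/-- basic hypergeometric series `₂φ₁(a,b;c;q,z)`. -/
def phi21 (a b c q z : ℂ) : ℂ :=
  ∑' n : ℕ, (qPoch a q n * qPoch b q n) / (qPoch c q n * qPoch q q n) * z ^ n

open Filter Finset Topology

/-! ### Auxiliary definitions -/

def Dq (q : ℝ) (n : ℕ) : ℝ := ∏ j ∈ Finset.range n, (1 - q * q ^ j)
def Cq (q : ℝ) : ℝ := Real.exp (q / (1 - q) ^ 2)
def c1 (q : ℝ) (n : ℕ) : ℂ := ((1 / Dq q n : ℝ) : ℂ)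
def c2 (q : ℝ) (n : ℕ) : ℂ := (((q ^ (∑ j ∈ Finset.range n, j)) / Dq q n : ℝ) : ℂ)
def E1 (q : ℝ) (w : ℂ) : ℂ := ∑' n, c1 q n * w ^ n
def E2 (q : ℝ) (w : ℂ) : ℂ := ∑' n, c2 q n * w ^ n
def P1 (β q : ℝ) (x : ℝ) (n : ℕ) : ℝ :=
  ∏ j ∈ Finset.range n, (1 + β * q^2 * x^2 * (q^j)^2)
def M1 (q : ℝ) (x : ℝ) (n : ℕ) : ℝ := ∏ j ∈ Finset.range n, (1 + x^2 * (q * q^j))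
def R1 (β q : ℝ) (x : ℝ) (n : ℕ) : ℝ := P1 β q x n / (M1 q x n * Dq q n)
def P2 (β q : ℝ) (x : ℝ) (n : ℕ) : ℝ :=
  ∏ j ∈ Finset.range n, (x^2 + β * q^2 * (q^j)^2)
def M2 (q : ℝ) (x : ℝ) (n : ℕ) : ℝ := ∏ j ∈ Finset.range n, (x^2 + q * q^j)
def R2 (β q : ℝ) (x : ℝ) (n : ℕ) : ℝ := P2 β q x n / (M2 q x n * Dq q n)
def cc (β q : ℝ) (n : ℕ) : ℂ := (((∏ j ∈ Finset.range n, (β * (q * q^j))) / Dq q n : ℝ) : ℂ)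

lemma Cq_pos {q : ℝ} : 0 < Cq q := Real.exp_pos _

/-- real denominator product `(q;q)_n` -/

lemma exp_le_one_sub {q a : ℝ} (ha0 : 0 < a) (haq : a ≤ q) (hq1 : q < 1) :
    Real.exp (-(a / (1 - q))) ≤ 1 - a := by
  have h1q : 0 < 1 - q := by linarith
  set t := a / (1 - q) with ht
  have ht0 : 0 < t := div_pos ha0 h1q
  have hE : 1 + t ≤ Real.exp t := by linarith [Real.add_one_le_exp t]
  have hEpos : (0:ℝ) < 1 + t := by linarith
  have h2 : Real.exp (-t) ≤ (1 + t)⁻¹ := by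
    rw [Real.exp_neg]
    exact inv_anti₀ hEpos hE
  refine h2.trans ?_
  rw [inv_le_iff_one_le_mul₀ hEpos] at *
  · have : a * (1 - a) / (1 - q) ≥ a := by
      rw [ge_iff_le, le_div_iff₀ h1q]
      nlinarith
    have hexp : (1 - a) * (1 + t) = 1 - a + a * (1 - a) / (1 - q) := by
      rw [ht]; ring
    nlinarith [hexp]

lemma Dq_factor_pos {q : ℝ} (hq0 : 0 < q) (hq1 : q < 1) (j : ℕ) : 0 < 1 - q * q ^ j := by
  have h1 : q * q ^ j ≤ q * 1 := by
    have := pow_le_one₀ hq0.le hq1.le (n := j)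
    nlinarith
  nlinarith

lemma Dq_pos {q : ℝ} (hq0 : 0 < q) (hq1 : q < 1) (n : ℕ) : 0 < Dq q n :=
  Finset.prod_pos fun j _ => Dq_factor_pos hq0 hq1 j

lemma Dq_le_one {q : ℝ} (hq0 : 0 < q) (hq1 : q < 1) (n : ℕ) : Dq q n ≤ 1 := by
  apply Finset.prod_le_one
  · exact fun j _ => (Dq_factor_pos hq0 hq1 j).le
  · intro j _
    nlinarith [pow_pos hq0 j]

lemma qgeom_le {q : ℝ} (hq0 : 0 < q) (hq1 : q < 1) (n : ℕ) :
    ∑ j ∈ Finset.range n, q ^ j ≤ (1 - q)⁻¹ := by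
  have h1q : 0 < 1 - q := by linarith
  rw [geom_sum_eq hq1.ne]
  have h2 : (q ^ n - 1) / (q - 1) = (1 - q ^ n) / (1 - q) := by
    rw [div_eq_div_iff (by linarith) (by linarith)]; ring
  rw [h2, div_le_iff₀ h1q, inv_mul_cancel₀ h1q.ne']
  have : (0:ℝ) ≤ q ^ n := by positivity
  linarith

lemma Dq_ge {q : ℝ} (hq0 : 0 < q) (hq1 : q < 1) (n : ℕ) : Real.exp (-(q / (1 - q) ^ 2)) ≤ Dq q n := by
  have h1q : 0 < 1 - q := by linarith
  have key : ∀ j ∈ Finset.range n, Real.exp (-(q * q ^ j / (1 - q))) ≤ 1 - q * q ^ j := by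
    intro j _
    refine exp_le_one_sub (by positivity) ?_ hq1
    nlinarith [pow_le_one₀ hq0.le hq1.le (n := j), pow_pos hq0 j]
  have hg := qgeom_le hq0 hq1 n
  have hsum : ∑ j ∈ Finset.range n, q * q ^ j / (1 - q) ≤ q / (1 - q) ^ 2 := by
    calc ∑ j ∈ Finset.range n, q * q ^ j / (1 - q)
        = q * (∑ j ∈ Finset.range n, q ^ j) / (1 - q) := by
          rw [Finset.mul_sum, Finset.sum_div]
      _ ≤ q * (1 - q)⁻¹ / (1 - q) := by gcongr
      _ = q / (1 - q) ^ 2 := by rw [sq]; field_simp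
  calc Real.exp (-(q / (1 - q) ^ 2))
      ≤ Real.exp (-(∑ j ∈ Finset.range n, q * q ^ j / (1 - q))) :=
        Real.exp_le_exp.2 (neg_le_neg hsum)
    _ = ∏ j ∈ Finset.range n, Real.exp (-(q * q ^ j / (1 - q))) := by
        rw [← Real.exp_sum, ← Finset.sum_neg_distrib]
    _ ≤ Dq q n := Finset.prod_le_prod (fun j _ => (Real.exp_pos _).le) key

lemma qPoch_q_eq {q : ℝ} (n : ℕ) : qPoch (q : ℂ) (q : ℂ) n = ((Dq q n : ℝ) : ℂ) := by
  rw [qPoch, Dq]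
  push_cast
  rfl

lemma multipliable_qfac {q : ℝ} (hq0 : 0 < q) (hq1 : q < 1) {a : ℂ} (ha : ‖a‖ < 1) :
    Multipliable (fun j : ℕ => 1 - a * (q : ℂ) ^ j) := by
  have hqn : ∀ j : ℕ, ‖a * (q:ℂ) ^ j‖ < 1 := by
    intro j
    rw [norm_mul, norm_pow, Complex.norm_real, Real.norm_of_nonneg hq0.le]
    have h1 : (q:ℝ) ^ j ≤ 1 := pow_le_one₀ hq0.le hq1.le
    have h2 : (0:ℝ) ≤ ‖a‖ := norm_nonneg a
    nlinarith
  have hne : ∀ (x : Unit) (j : ℕ), (fun j (_ : Unit) => 1 - a * (q:ℂ) ^ j) j x ≠ 0 := by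
    intro _ j
    intro h
    have : ‖a * (q:ℂ)^j‖ = 1 := by
      have : a * (q:ℂ)^j = 1 := by linear_combination -h
      rw [this, norm_one]
    linarith [hqn j]
  have hs : ∀ (_ : Unit), Summable fun j : ℕ => Complex.log (1 - a * (q:ℂ) ^ j) := by
    intro _
    apply Summable.of_norm_bounded_eventually_nat (g := fun j => 3/2 * (‖a‖ * q ^ j))
    · exact ((summable_geometric_of_lt_one hq0.le hq1).mul_left ‖a‖).mul_left (3/2)
    · have hsmall : ∀ᶠ j : ℕ in atTop, ‖a‖ * q ^ j ≤ 1/2 := by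
        have := Tendsto.const_mul ‖a‖ (tendsto_pow_atTop_nhds_zero_of_lt_one hq0.le hq1)
        rw [mul_zero] at this
        exact this.eventually_le_const (by norm_num)
      filter_upwards [hsmall] with j hj
      have h1 : (1 : ℂ) - a * (q:ℂ)^j = 1 + (-(a * (q:ℂ)^j)) := by ring
      rw [h1]
      have h2 : ‖-(a * (q:ℂ)^j)‖ ≤ 1/2 := by
        rw [norm_neg, norm_mul, norm_pow, Complex.norm_real, Real.norm_of_nonneg hq0.le]
        exact hj
      refine (Complex.norm_log_one_add_half_le_self h2).trans ?_
      rw [norm_neg, norm_mul, norm_pow, Complex.norm_real, Real.norm_of_nonneg hq0.le]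
  exact Complex.multipliable_of_summable_log (hs ())

lemma tendsto_qPoch {q : ℝ} (hq0 : 0 < q) (hq1 : q < 1) {a : ℂ} (ha : ‖a‖ < 1) :
    Tendsto (fun N => qPoch a (q:ℂ) N) atTop (𝓝 (qPochInf a (q:ℂ))) :=
  (multipliable_qfac hq0 hq1 ha).hasProd.tendsto_prod_nat

lemma Dq_inv_le {q : ℝ} (hq0 : 0 < q) (hq1 : q < 1) (n : ℕ) : 1 / Dq q n ≤ Cq q := by
  rw [div_le_iff₀ (Dq_pos hq0 hq1 n)]
  have h := Dq_ge hq0 hq1 n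
  have h2 : Real.exp (-(q / (1-q)^2)) * Cq q = 1 := by
    rw [Cq, ← Real.exp_add]; simp
  nlinarith [Real.exp_pos (q / (1-q)^2), Real.exp_pos (-(q / (1-q)^2)), Cq, h]


lemma c1_norm {q : ℝ} (hq0 : 0 < q) (hq1 : q < 1) (n : ℕ) : ‖c1 q n‖ ≤ Cq q := by
  have hD := Dq_pos hq0 hq1 n
  rw [c1, Complex.norm_real, Real.norm_of_nonneg (by positivity)]
  exact Dq_inv_le hq0 hq1 n

lemma c2_norm {q : ℝ} (hq0 : 0 < q) (hq1 : q < 1) (n : ℕ) : ‖c2 q n‖ ≤ Cq q := by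
  have hD := Dq_pos hq0 hq1 n
  rw [c2, Complex.norm_real, Real.norm_of_nonneg (by positivity)]
  refine le_trans ?_ (Dq_inv_le hq0 hq1 n)
  rw [div_le_div_iff₀ (Dq_pos hq0 hq1 n) (Dq_pos hq0 hq1 n)]
  have : q ^ (∑ j ∈ Finset.range n, j) ≤ 1 := pow_le_one₀ hq0.le hq1.le
  nlinarith [Dq_pos hq0 hq1 n]

lemma summable_coeff {c : ℕ → ℂ} {M : ℝ} (hc : ∀ n, ‖c n‖ ≤ M) {w : ℂ} (hw : ‖w‖ < 1) :
    Summable fun n => c n * w ^ n := by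
  apply Summable.of_norm_bounded (g := fun n => M * ‖w‖ ^ n)
    ((summable_geometric_of_lt_one (norm_nonneg w) hw).mul_left M)
  intro n
  rw [norm_mul, norm_pow]
  exact mul_le_mul_of_nonneg_right (hc n) (by positivity)

/-- abstract: continuity at 0 of a power series with bounded coefficients -/
lemma tendsto_series_one {c : ℕ → ℂ} {M : ℝ} (hM : 0 ≤ M) (hc : ∀ n, ‖c n‖ ≤ M)
    (hc0 : c 0 = 1) {w : ℂ} (hw : ‖w‖ < 1) {q : ℝ} (hq0 : 0 < q) (hq1 : q < 1) :
    Tendsto (fun N : ℕ => ∑' n, c n * ((q:ℂ) ^ N * w) ^ n) atTop (𝓝 1) := by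
  have hqw : ∀ N : ℕ, ‖(q:ℂ) ^ N * w‖ ≤ ‖w‖ := by
    intro N
    rw [norm_mul, norm_pow, Complex.norm_real, Real.norm_of_nonneg hq0.le]
    have h1 : q ^ N ≤ 1 := pow_le_one₀ hq0.le hq1.le
    nlinarith [norm_nonneg w, pow_pos hq0 N]
  have key : ∀ N : ℕ, ‖(∑' n, c n * ((q:ℂ) ^ N * w) ^ n) - 1‖ ≤ M * ‖w‖ / (1 - ‖w‖) * q ^ N := by
    intro N
    set u := (q:ℂ) ^ N * w with hu
    have hun : ‖u‖ < 1 := lt_of_le_of_lt (hqw N) hw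
    have hsum : Summable fun n => c n * u ^ n := summable_coeff hc hun
    have h0 : (∑' n, c n * u ^ n) = 1 + ∑' n, c (n+1) * u ^ (n+1) := by
      rw [Summable.tsum_eq_zero_add hsum, hc0, pow_zero, mul_one]
    rw [h0, add_sub_cancel_left]
    have hb : ∀ n : ℕ, ‖c (n+1) * u ^ (n+1)‖ ≤ (M * ‖u‖) * ‖u‖ ^ n := by
      intro n
      rw [norm_mul, norm_pow, pow_succ]
      calc ‖c (n+1)‖ * (‖u‖ ^ n * ‖u‖) ≤ M * (‖u‖ ^ n * ‖u‖) := by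
            apply mul_le_mul_of_nonneg_right (hc _) (by positivity)
        _ = (M * ‖u‖) * ‖u‖ ^ n := by ring
    have hsum2 : Summable fun n : ℕ => (M * ‖u‖) * ‖u‖ ^ n :=
      (summable_geometric_of_lt_one (norm_nonneg u) hun).mul_left _
    calc ‖∑' n, c (n+1) * u ^ (n+1)‖ ≤ ∑' n, ‖c (n+1) * u ^ (n+1)‖ :=
          norm_tsum_le_tsum_norm ((hsum.comp_injective (add_left_injective 1)).norm)
      _ ≤ ∑' n : ℕ, (M * ‖u‖) * ‖u‖ ^ n := by
          apply Summable.tsum_le_tsum hb ((hsum.comp_injective (add_left_injective 1)).norm) hsum2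
      _ = (M * ‖u‖) * (1 - ‖u‖)⁻¹ := by
          rw [tsum_mul_left, tsum_geometric_of_lt_one (norm_nonneg u) hun]
      _ ≤ M * ‖w‖ / (1 - ‖w‖) * q ^ N := by
          rw [hu, norm_mul, norm_pow, Complex.norm_real, Real.norm_of_nonneg hq0.le]
          have hu' : q ^ N * ‖w‖ = ‖u‖ := by
            rw [hu, norm_mul, norm_pow, Complex.norm_real, Real.norm_of_nonneg hq0.le]
          have h1 : (1 - q ^ N * ‖w‖)⁻¹ ≤ (1 - ‖w‖)⁻¹ := by
            rw [hu']
            apply inv_anti₀ (by linarith) (by linarith [hqw N])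
          have hqN1 : q ^ N ≤ 1 := pow_le_one₀ hq0.le hq1.le
          have hqN0 : 0 < q ^ N := pow_pos hq0 N
          calc M * (q ^ N * ‖w‖) * (1 - q ^ N * ‖w‖)⁻¹ ≤ M * (q ^ N * ‖w‖) * (1 - ‖w‖)⁻¹ := by
                apply mul_le_mul_of_nonneg_left h1 (by positivity)
            _ = M * ‖w‖ / (1 - ‖w‖) * q ^ N := by field_simp
  have h2 : Tendsto (fun N : ℕ => (∑' n, c n * ((q:ℂ) ^ N * w) ^ n) - 1) atTop (𝓝 0) := by
    apply squeeze_zero_norm key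
    have := (tendsto_pow_atTop_nhds_zero_of_lt_one hq0.le hq1).const_mul (M * ‖w‖ / (1 - ‖w‖))
    rw [mul_zero] at this
    exact this
  have := h2.add_const 1
  simpa using this

lemma norm_qw {q : ℝ} (hq0 : 0 < q) (hq1 : q < 1) {w : ℂ} (hw : ‖w‖ < 1) : ‖(q:ℂ) * w‖ < 1 := by
  rw [norm_mul, Complex.norm_real, Real.norm_of_nonneg hq0.le]
  nlinarith [norm_nonneg w]

lemma E_sub {q : ℝ} (hq0 : 0 < q) (hq1 : q < 1) {c : ℕ → ℂ} {M : ℝ} (hc : ∀ n, ‖c n‖ ≤ M) {w : ℂ} (hw : ‖w‖ < 1) :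
    (∑' n, c n * w ^ n) - (∑' n, c n * ((q:ℂ) * w) ^ n)
      = ∑' n, (c (n+1) * (1 - (q:ℂ) ^ (n+1))) * w ^ (n+1) := by
  have h1 : Summable fun n => c n * w ^ n := summable_coeff hc hw
  have h2 : Summable fun n => c n * ((q:ℂ) * w) ^ n :=
    summable_coeff hc (norm_qw hq0 hq1 hw)
  have h3 : (∑' n, c n * w ^ n) - (∑' n, c n * ((q:ℂ) * w) ^ n)
      = ∑' n, (c n * (1 - (q:ℂ) ^ n)) * w ^ n := by
    rw [← Summable.tsum_sub h1 h2]
    congr 1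
    ext n
    rw [mul_pow]
    ring
  rw [h3]
  have h4 : Summable fun n => (c n * (1 - (q:ℂ) ^ n)) * w ^ n := by
    apply summable_coeff (M := M * 2) _ hw
    intro n
    rw [norm_mul]
    have hn : ‖(1 : ℂ) - (q:ℂ) ^ n‖ ≤ 2 := by
      calc ‖(1:ℂ) - (q:ℂ)^n‖ ≤ ‖(1:ℂ)‖ + ‖((q:ℂ))^n‖ := norm_sub_le _ _
        _ ≤ 2 := by
          rw [norm_one, norm_pow, Complex.norm_real, Real.norm_of_nonneg hq0.le]
          have := pow_le_one₀ hq0.le hq1.le (n := n)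
          linarith
    exact mul_le_mul (hc n) hn (norm_nonneg _) ((norm_nonneg (c n)).trans (hc n))
  rw [Summable.tsum_eq_zero_add h4]
  simp

lemma c1_zero {q : ℝ} : c1 q 0 = 1 := by simp [c1, Dq]
lemma c2_zero {q : ℝ} : c2 q 0 = 1 := by simp [c2, Dq]

lemma c1_rec {q : ℝ} (hq0 : 0 < q) (hq1 : q < 1) (n : ℕ) : c1 q (n+1) * (1 - (q:ℂ) ^ (n+1)) = c1 q n := by
  have hD := Dq_pos hq0 hq1 n
  have hD1 := Dq_pos hq0 hq1 (n+1)
  have hsucc : Dq q (n+1) = Dq q n * (1 - q * q ^ n) := Finset.prod_range_succ _ _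
  have hreal : (1 / Dq q (n+1)) * (1 - q * q ^ n) = 1 / Dq q n := by
    rw [hsucc]
    have hf : 0 < 1 - q * q ^ n := by nlinarith [hsucc, hD, hD1]
    field_simp
  have : ((q:ℂ)) ^ (n+1) = ((q * q ^ n : ℝ) : ℂ) := by push_cast; ring
  rw [c1, c1, this, ← Complex.ofReal_one, ← Complex.ofReal_sub, ← Complex.ofReal_mul, hreal]

lemma c2_rec {q : ℝ} (hq0 : 0 < q) (hq1 : q < 1) (n : ℕ) : c2 q (n+1) * (1 - (q:ℂ) ^ (n+1)) = c2 q n * (q:ℂ) ^ n := by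
  have hD := Dq_pos hq0 hq1 n
  have hD1 := Dq_pos hq0 hq1 (n+1)
  have hsucc : Dq q (n+1) = Dq q n * (1 - q * q ^ n) := Finset.prod_range_succ _ _
  have hexp : (∑ j ∈ Finset.range (n+1), j) = (∑ j ∈ Finset.range n, j) + n :=
    Finset.sum_range_succ _ _
  have hf : 0 < 1 - q * q ^ n := by nlinarith [hsucc, hD, hD1]
  have hreal : (q ^ (∑ j ∈ Finset.range (n+1), j) / Dq q (n+1)) * (1 - q * q ^ n)
      = (q ^ (∑ j ∈ Finset.range n, j) / Dq q n) * q ^ n := by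
    rw [hsucc, hexp, pow_add]
    rw [div_mul_eq_mul_div, mul_div_mul_right _ _ hf.ne']; ring
  have h1 : ((q:ℂ)) ^ (n+1) = ((q * q ^ n : ℝ) : ℂ) := by push_cast; ring
  have h2 : ((q:ℂ)) ^ n = ((q ^ n : ℝ) : ℂ) := by push_cast; ring
  rw [c2, c2, h1, h2, ← Complex.ofReal_one, ← Complex.ofReal_sub, ← Complex.ofReal_mul,
    ← Complex.ofReal_mul, hreal]

lemma E1_funct {q : ℝ} (hq0 : 0 < q) (hq1 : q < 1) {w : ℂ} (hw : ‖w‖ < 1) : (1 - w) * E1 q w = E1 q ((q:ℂ) * w) := by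
  have h := E_sub hq0 hq1 (c1_norm hq0 hq1) hw
  have h2 : ∑' n, (c1 q (n+1) * (1 - (q:ℂ) ^ (n+1))) * w ^ (n+1) = w * E1 q w := by
    rw [E1, ← tsum_mul_left]
    congr 1
    ext n
    rw [c1_rec hq0 hq1 n, pow_succ]
    ring
  rw [h2] at h
  rw [E1, E1] at *
  linear_combination h

lemma E2_funct {q : ℝ} (hq0 : 0 < q) (hq1 : q < 1) {w : ℂ} (hw : ‖w‖ < 1) : E2 q w = (1 + w) * E2 q ((q:ℂ) * w) := by
  have h := E_sub hq0 hq1 (c2_norm hq0 hq1) hw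
  have h2 : ∑' n, (c2 q (n+1) * (1 - (q:ℂ) ^ (n+1))) * w ^ (n+1) = w * E2 q ((q:ℂ) * w) := by
    rw [E2, ← tsum_mul_left]
    congr 1
    ext n
    rw [c2_rec hq0 hq1 n, mul_pow, pow_succ]
    ring
  rw [h2] at h
  rw [E2, E2] at *
  linear_combination h

lemma norm_qpow_w {q : ℝ} (hq0 : 0 < q) (hq1 : q < 1) {w : ℂ} (hw : ‖w‖ < 1) (N : ℕ) : ‖(q:ℂ) ^ N * w‖ < 1 := by
  rw [norm_mul, norm_pow, Complex.norm_real, Real.norm_of_nonneg hq0.le]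
  have h1 : q ^ N ≤ 1 := pow_le_one₀ hq0.le hq1.le
  nlinarith [norm_nonneg w, pow_pos hq0 N]

lemma E1_iter {q : ℝ} (hq0 : 0 < q) (hq1 : q < 1) {w : ℂ} (hw : ‖w‖ < 1) (N : ℕ) :
    E1 q w * qPoch w (q:ℂ) N = E1 q ((q:ℂ) ^ N * w) := by
  induction N with
  | zero => simp [qPoch]
  | succ N ih =>
    rw [qPoch, Finset.prod_range_succ, ← mul_assoc, ← qPoch, ih]
    have := E1_funct hq0 hq1 (norm_qpow_w hq0 hq1 hw N)
    calc E1 q ((q:ℂ) ^ N * w) * (1 - w * (q:ℂ) ^ N)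
        = (1 - (q:ℂ) ^ N * w) * E1 q ((q:ℂ) ^ N * w) := by ring
      _ = E1 q ((q:ℂ) * ((q:ℂ) ^ N * w)) := this
      _ = E1 q ((q:ℂ) ^ (N+1) * w) := by ring_nf

lemma E2_iter {q : ℝ} (hq0 : 0 < q) (hq1 : q < 1) {w : ℂ} (hw : ‖w‖ < 1) (N : ℕ) :
    E2 q w = qPoch (-w) (q:ℂ) N * E2 q ((q:ℂ) ^ N * w) := by
  induction N with
  | zero => simp [qPoch]
  | succ N ih =>
    rw [qPoch, Finset.prod_range_succ, ← qPoch]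
    have := E2_funct hq0 hq1 (norm_qpow_w hq0 hq1 hw N)
    rw [ih, this]
    have harg : (q:ℂ) * ((q:ℂ) ^ N * w) = (q:ℂ) ^ (N+1) * w := by ring
    rw [harg]
    ring

lemma E1_mul_qPochInf {q : ℝ} (hq0 : 0 < q) (hq1 : q < 1) {w : ℂ} (hw : ‖w‖ < 1) : E1 q w * qPochInf w (q:ℂ) = 1 := by
  have hL : Tendsto (fun N => E1 q w * qPoch w (q:ℂ) N) atTop (𝓝 (E1 q w * qPochInf w (q:ℂ))) :=
    (tendsto_qPoch hq0 hq1 hw).const_mul _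
  have hR : Tendsto (fun N => E1 q ((q:ℂ) ^ N * w)) atTop (𝓝 1) := by
    have := tendsto_series_one (Cq_pos (q := q)).le (c1_norm hq0 hq1) c1_zero hw hq0 hq1
    exact this
  have heq : (fun N => E1 q w * qPoch w (q:ℂ) N) = fun N => E1 q ((q:ℂ) ^ N * w) := by
    ext N; exact E1_iter hq0 hq1 hw N
  rw [heq] at hL
  exact tendsto_nhds_unique hL hR

lemma E1_eq {q : ℝ} (hq0 : 0 < q) (hq1 : q < 1) {w : ℂ} (hw : ‖w‖ < 1) : E1 q w = 1 / qPochInf w (q:ℂ) := by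
  have h := E1_mul_qPochInf hq0 hq1 hw
  have hne : qPochInf w (q:ℂ) ≠ 0 := by
    intro h0
    rw [h0, mul_zero] at h
    exact one_ne_zero h.symm
  field_simp
  linear_combination h

lemma E2_eq {q : ℝ} (hq0 : 0 < q) (hq1 : q < 1) {w : ℂ} (hw : ‖w‖ < 1) : E2 q w = qPochInf (-w) (q:ℂ) := by
  have hwn : ‖-w‖ < 1 := by rwa [norm_neg]
  have hL : Tendsto (fun N => qPoch (-w) (q:ℂ) N * E2 q ((q:ℂ) ^ N * w)) atTop
      (𝓝 (qPochInf (-w) (q:ℂ) * 1)) := by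
    exact (tendsto_qPoch hq0 hq1 hwn).mul
      (tendsto_series_one (Cq_pos (q := q)).le (c2_norm hq0 hq1) c2_zero hw hq0 hq1)
  have heq : (fun N => qPoch (-w) (q:ℂ) N * E2 q ((q:ℂ) ^ N * w)) = fun _ => E2 q w := by
    ext N; exact (E2_iter hq0 hq1 hw N).symm
  rw [heq] at hL
  have := tendsto_nhds_unique hL tendsto_const_nhds
  rw [mul_one] at this
  exact this.symm ▸ rfl

lemma key_uniform (C : ℝ) (hC : 0 ≤ C) (A : ℝ → ℕ → ℂ) (c : ℕ → ℂ) (g : ℂ → ℂ)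
    (hbound : ∀ᶠ x in 𝓝[>] (0:ℝ), ∀ n, ‖A x n‖ ≤ C)
    (hcb : ∀ n, ‖c n‖ ≤ C)
    (hlim : ∀ n, Filter.Tendsto (fun x => A x n) (𝓝[>] (0:ℝ)) (𝓝 (c n)))
    (K : Set ℂ) (hK : IsCompact K) (hKs : K ⊆ {z : ℂ | 1 < ‖z‖})
    (hg : ∀ z ∈ K, g z = ∑' n, c n * (1/z) ^ n) :
    TendstoUniformlyOn (fun (x : ℝ) (z : ℂ) => ∑' n, A x n * (1/z) ^ n) g (𝓝[>] (0:ℝ)) K := by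
  rcases K.eq_empty_or_nonempty with rfl | hne
  · simp [tendstoUniformlyOn_empty]
  obtain ⟨z₀, hz₀K, hmax⟩ := hK.exists_isMaxOn hne
    (f := fun z : ℂ => (‖z‖)⁻¹)
    (ContinuousOn.inv₀ continuous_norm.continuousOn
      (fun z hz => by have := hKs hz; simp only [Set.mem_setOf_eq] at this; exact (zero_lt_one.trans this).ne'))
  set r : ℝ := (‖z₀‖)⁻¹ with hr
  have hz₀ : 1 < ‖z₀‖ := hKs hz₀K
  have hr1 : r < 1 := by rw [hr]; exact inv_lt_one_of_one_lt₀ hz₀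
  have hr0 : 0 ≤ r := by positivity
  have hwr : ∀ z ∈ K, ‖1/z‖ ≤ r := by
    intro z hz
    have h1 : 1 < ‖z‖ := hKs hz
    have : ‖(1:ℂ)/z‖ = (‖z‖)⁻¹ := by
      rw [norm_div, norm_one, one_div]
    rw [this]
    exact hmax hz
  rw [Metric.tendstoUniformlyOn_iff]
  intro ε hε
  have htail : Filter.Tendsto (fun N : ℕ => 2*C*(1-r)⁻¹ * r^N) atTop (𝓝 0) := by
    have := (tendsto_pow_atTop_nhds_zero_of_lt_one hr0 hr1).const_mul (2*C*(1-r)⁻¹)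
    rwa [mul_zero] at this
  obtain ⟨N, hN⟩ : ∃ N : ℕ, 2*C*(1-r)⁻¹ * r^N < ε/2 :=
    (htail.eventually_lt_const (half_pos hε)).exists
  have hfin : ∀ᶠ x in 𝓝[>] (0:ℝ), ∀ n ∈ Finset.range N, ‖A x n - c n‖ < ε/(2*(N+1)) := by
    rw [Finset.eventually_all]
    intro n _
    have := Metric.tendsto_nhds.mp (hlim n) (ε/(2*(N+1))) (by positivity)
    filter_upwards [this] with x hx
    rwa [dist_eq_norm] at hx
  filter_upwards [hbound, hfin] with x hbx hfx z hz
  set w : ℂ := 1/z with hwdef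
  have hw : ‖w‖ ≤ r := hwr z hz
  have hw1 : ‖w‖ < 1 := lt_of_le_of_lt hw hr1
  have hsA : Summable fun n => A x n * w ^ n := summable_coeff hbx hw1
  have hsc : Summable fun n => c n * w ^ n := summable_coeff hcb hw1
  rw [hg z hz, dist_eq_norm]
  have hdiff : (∑' n, c n * w^n) - (∑' n, A x n * w^n) = ∑' n, (c n - A x n) * w^n := by
    rw [← Summable.tsum_sub hsc hsA]
    congr 1; ext n; ring
  rw [hdiff]
  have hdb : ∀ n, ‖(c n - A x n) * w^n‖ ≤ 2*C * r^n := by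
    intro n
    rw [norm_mul, norm_pow]
    have h1 : ‖c n - A x n‖ ≤ 2*C := by
      calc ‖c n - A x n‖ ≤ ‖c n‖ + ‖A x n‖ := norm_sub_le _ _
        _ ≤ 2*C := by linarith [hcb n, hbx n]
    have h2 : ‖w‖^n ≤ r^n := pow_le_pow_left₀ (norm_nonneg _) hw n
    exact mul_le_mul h1 h2 (by positivity) (by positivity)
  have hsgeo : Summable fun n : ℕ => 2*C * r^n :=
    (summable_geometric_of_lt_one hr0 hr1).mul_left _
  have hsnorm : Summable fun n => ‖(c n - A x n) * w^n‖ :=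
    Summable.of_nonneg_of_le (fun n => norm_nonneg _) hdb hsgeo
  calc ‖∑' n, (c n - A x n) * w^n‖ ≤ ∑' n, ‖(c n - A x n) * w^n‖ :=
        norm_tsum_le_tsum_norm hsnorm
    _ = (∑ n ∈ Finset.range N, ‖(c n - A x n) * w^n‖)
        + ∑' n, ‖(c (n+N) - A x (n+N)) * w^(n+N)‖ := (Summable.sum_add_tsum_nat_add N hsnorm).symm
    _ < ε/2 + ε/2 := by
        apply add_lt_add_of_le_of_lt
        · calc (∑ n ∈ Finset.range N, ‖(c n - A x n) * w^n‖)
              ≤ ∑ n ∈ Finset.range N, ε/(2*(N+1)) := by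
                apply Finset.sum_le_sum
                intro n hn
                rw [norm_mul, norm_pow]
                have h1 : ‖c n - A x n‖ < ε/(2*(N+1)) := by
                  have := hfx n hn
                  rw [norm_sub_rev]
                  exact this
                have h2 : ‖w‖^n ≤ 1 := pow_le_one₀ (norm_nonneg _) hw1.le
                have h3 : (0:ℝ) < ε/(2*(N+1)) := by positivity
                nlinarith [norm_nonneg (c n - A x n), pow_nonneg (norm_nonneg w) n]
            _ = N * (ε/(2*(N+1))) := by rw [Finset.sum_const, Finset.card_range]; ring
            _ ≤ ε/2 := by
                rw [mul_comm, div_mul_eq_mul_div, div_le_div_iff₀ (by positivity) two_pos]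
                nlinarith [hε.le, Nat.cast_nonneg (α := ℝ) N]
        · calc (∑' n, ‖(c (n+N) - A x (n+N)) * w^(n+N)‖)
              ≤ ∑' n : ℕ, (2*C*r^N) * r^n := by
                apply Summable.tsum_le_tsum _ (hsnorm.comp_injective (add_left_injective N))
                  ((summable_geometric_of_lt_one hr0 hr1).mul_left _)
                intro n
                calc ‖(c (n+N) - A x (n+N)) * w^(n+N)‖ ≤ 2*C * r^(n+N) := hdb (n+N)
                  _ = (2*C*r^N) * r^n := by rw [pow_add]; ring
            _ = 2*C*(1-r)⁻¹ * r^N := by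
                rw [tsum_mul_left, tsum_geometric_of_lt_one hr0 hr1]; ring
            _ < ε/2 := hN
    _ = ε := by ring

lemma A1_eq {q β : ℝ} (hβ0 : 0 ≤ β) (x : ℝ) (n : ℕ) :
    (qPoch (Complex.I * (q : ℂ) * (Real.sqrt β : ℂ) * (x : ℂ)) (q:ℂ) n *
      qPoch (-(Complex.I * (q : ℂ) * (Real.sqrt β : ℂ) * (x : ℂ))) (q:ℂ) n) /
      (qPoch (-((x : ℂ) ^ 2 * (q : ℂ))) (q:ℂ) n * qPoch (q:ℂ) (q:ℂ) n)
    = ((R1 β q x n : ℝ) : ℂ) := by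
  have hs : ((Real.sqrt β : ℝ) : ℂ) ^ 2 = (β : ℂ) := by
    rw [← Complex.ofReal_pow, Real.sq_sqrt hβ0]
  have h1 : qPoch (Complex.I * (q : ℂ) * (Real.sqrt β : ℂ) * (x : ℂ)) (q:ℂ) n *
      qPoch (-(Complex.I * (q : ℂ) * (Real.sqrt β : ℂ) * (x : ℂ))) (q:ℂ) n
      = ((P1 β q x n : ℝ) : ℂ) := by
    rw [qPoch, qPoch, ← Finset.prod_mul_distrib, P1]
    push_cast
    apply Finset.prod_congr rfl
    intro j _
    linear_combination (-((q:ℂ)^2*(x:ℂ)^2*((q:ℂ)^j)^2) * ((Real.sqrt β : ℂ))^2) * Complex.I_sq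
      + ((q:ℂ)^2*(x:ℂ)^2*((q:ℂ)^j)^2) * hs
  have h2 : qPoch (-((x : ℂ) ^ 2 * (q : ℂ))) (q:ℂ) n = ((M1 q x n : ℝ) : ℂ) := by
    rw [qPoch, M1]
    push_cast
    apply Finset.prod_congr rfl
    intro j _
    ring
  rw [h1, h2, qPoch_q_eq, R1]
  push_cast
  ring
lemma R1_nonneg {q β : ℝ} (hq0 : 0 < q) (hq1 : q < 1) (hβ0 : 0 ≤ β) (hβq : β * q ≤ 1) (x : ℝ) (n : ℕ) : 0 ≤ R1 β q x n := by
  have hP : 0 ≤ P1 β q x n := Finset.prod_nonneg fun j _ => by positivity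
  have hM : 0 < M1 q x n := Finset.prod_pos fun j _ => by positivity
  have hD := Dq_pos hq0 hq1 n
  rw [R1]; positivity

lemma R1_le {q β : ℝ} (hq0 : 0 < q) (hq1 : q < 1) (hβ0 : 0 ≤ β) (hβq : β * q ≤ 1) (x : ℝ) (hx : x^2 ≤ 1) (n : ℕ) :
    R1 β q x n ≤ Real.exp (q / (1 - q)) * Cq q := by
  have hD := Dq_pos hq0 hq1 n
  have hM : 1 ≤ M1 q x n := by
    rw [M1]
    calc (1:ℝ) = ∏ _j ∈ Finset.range n, 1 := by simp
      _ ≤ ∏ j ∈ Finset.range n, (1 + x^2 * (q * q^j)) :=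
        Finset.prod_le_prod (fun j _ => zero_le_one)
          (fun j _ => by nlinarith [mul_nonneg (sq_nonneg x) (mul_pos hq0 (pow_pos hq0 j)).le])
  have hM0 : 0 < M1 q x n := lt_of_lt_of_le one_pos hM
  have hP : P1 β q x n ≤ Real.exp (q / (1 - q)) := by
    have step1 : P1 β q x n ≤ ∏ j ∈ Finset.range n, Real.exp (q * q^j) := by
      apply Finset.prod_le_prod
      · intro j _; positivity
      · intro j _
        have hqj : 0 < q ^ j := pow_pos hq0 j
        have hqj1 : q ^ j ≤ 1 := pow_le_one₀ hq0.le hq1.le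
        have hx0 : 0 ≤ x^2 := sq_nonneg x
        have ha : β * q^2 * x^2 * (q^j)^2 ≤ q * x^2 * (q^j)^2 := by
          nlinarith [mul_le_mul_of_nonneg_right hβq
            (mul_nonneg (mul_nonneg hq0.le hx0) (sq_nonneg (q^j)))]
        have hb : q * x^2 * (q^j)^2 ≤ q * (q^j)^2 := by
          nlinarith [mul_le_mul_of_nonneg_right hx (mul_nonneg hq0.le (sq_nonneg (q^j)))]
        have hc : q * (q^j)^2 ≤ q * q^j := by
          nlinarith [mul_le_mul_of_nonneg_right hqj1 hqj.le]
        have hfac : 1 + β * q^2 * x^2 * (q^j)^2 ≤ 1 + q * q^j := by linarith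
        refine hfac.trans ?_
        linarith [Real.add_one_le_exp (q * q^j)]
    refine step1.trans ?_
    rw [← Real.exp_sum]
    apply Real.exp_le_exp.2
    rw [← Finset.mul_sum]
    have := qgeom_le hq0 hq1 n
    have h1q : 0 < 1 - q := by linarith
    rw [div_eq_mul_inv]
    nlinarith
  have hP0 : 0 ≤ P1 β q x n := Finset.prod_nonneg fun j _ => by positivity
  calc R1 β q x n ≤ P1 β q x n / Dq q n := by
        rw [R1]
        apply div_le_div_of_nonneg_left hP0 hD
        nlinarith
    _ = P1 β q x n * (1 / Dq q n) := by ring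
    _ ≤ Real.exp (q / (1 - q)) * Cq q := by
        apply mul_le_mul hP (Dq_inv_le hq0 hq1 n) (by positivity) (Real.exp_pos _).le

lemma R1_tendsto {q β : ℝ} (hq0 : 0 < q) (hq1 : q < 1) (n : ℕ) :
    Filter.Tendsto (fun x : ℝ => ((R1 β q x n : ℝ) : ℂ)) (𝓝[>] (0:ℝ)) (𝓝 (c1 q n)) := by
  have hD := Dq_pos hq0 hq1 n
  have hP : Continuous fun x : ℝ => P1 β q x n := by
    apply continuous_finset_prod
    intro j _
    continuity
  have hM : Continuous fun x : ℝ => M1 q x n := by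
    apply continuous_finset_prod
    intro j _
    continuity
  have hP0 : P1 β q 0 n = 1 := by
    rw [P1]; apply Finset.prod_eq_one; intro j _; ring
  have hM0 : M1 q 0 n = 1 := by
    rw [M1]; apply Finset.prod_eq_one; intro j _; ring
  have ht : Filter.Tendsto (fun x : ℝ => R1 β q x n) (𝓝 0) (𝓝 (1 / Dq q n)) := by
    have := (hP.tendsto 0).div ((hM.tendsto 0).mul tendsto_const_nhds) (by
      rw [hM0, one_mul]; exact hD.ne')
    rw [hP0, hM0, one_mul] at this
    exact this
  have := (Complex.continuous_ofReal.tendsto _).comp ht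
  rw [c1]
  exact this.mono_left nhdsWithin_le_nhds

/-- limit coefficients for part 2 -/
lemma A2_eq {q β : ℝ} (hq0 : 0 < q) (hq1 : q < 1) (hβ0 : 0 ≤ β) (x : ℝ) (hx : x ≠ 0) (n : ℕ) :
    (qPoch (Complex.I * (q : ℂ) * (Real.sqrt β : ℂ) / (x : ℂ)) (q:ℂ) n *
      qPoch (-(Complex.I * (q : ℂ) * (Real.sqrt β : ℂ) / (x : ℂ))) (q:ℂ) n) /
      (qPoch (-((q : ℂ) / (x : ℂ) ^ 2)) (q:ℂ) n * qPoch (q:ℂ) (q:ℂ) n)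
    = ((R2 β q x n : ℝ) : ℂ) := by
  have hxC : (x : ℂ) ≠ 0 := Complex.ofReal_ne_zero.2 hx
  have hX : ((x:ℂ)^2)^n ≠ 0 := pow_ne_zero _ (pow_ne_zero _ hxC)
  have hs : ((Real.sqrt β : ℝ) : ℂ) ^ 2 = (β : ℂ) := by
    rw [← Complex.ofReal_pow, Real.sq_sqrt hβ0]
  have h1 : qPoch (Complex.I * (q : ℂ) * (Real.sqrt β : ℂ) / (x : ℂ)) (q:ℂ) n *
      qPoch (-(Complex.I * (q : ℂ) * (Real.sqrt β : ℂ) / (x : ℂ))) (q:ℂ) n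
      = ((P2 β q x n : ℝ) : ℂ) / ((x:ℂ)^2)^n := by
    rw [qPoch, qPoch, ← Finset.prod_mul_distrib, P2]
    push_cast
    rw [show ((x:ℂ)^2)^n = ∏ _j ∈ Finset.range n, (x:ℂ)^2 by
      rw [Finset.prod_const, Finset.card_range], ← Finset.prod_div_distrib]
    apply Finset.prod_congr rfl
    intro j _
    rw [eq_div_iff (pow_ne_zero 2 hxC)]
    field_simp
    linear_combination (-((q:ℂ)^2 * ((q:ℂ)^j)^2) * ((Real.sqrt β : ℂ))^2) * Complex.I_sq
      + (((q:ℂ)^2 * ((q:ℂ)^j)^2)) * hs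
  have h2 : qPoch (-((q : ℂ) / (x : ℂ) ^ 2)) (q:ℂ) n = ((M2 q x n : ℝ) : ℂ) / ((x:ℂ)^2)^n := by
    rw [qPoch, M2]
    push_cast
    rw [show ((x:ℂ)^2)^n = ∏ _j ∈ Finset.range n, (x:ℂ)^2 by
      rw [Finset.prod_const, Finset.card_range], ← Finset.prod_div_distrib]
    apply Finset.prod_congr rfl
    intro j _
    rw [eq_div_iff (pow_ne_zero 2 hxC)]
    field_simp
    ring
  have hM2 : (0:ℝ) < M2 q x n := by
    rw [M2]
    exact Finset.prod_pos fun j _ => by positivity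
  have hD := Dq_pos hq0 hq1 n
  have hM2C : ((M2 q x n : ℝ) : ℂ) ≠ 0 := Complex.ofReal_ne_zero.2 hM2.ne'
  have hDC : ((Dq q n : ℝ) : ℂ) ≠ 0 := Complex.ofReal_ne_zero.2 hD.ne'
  rw [h1, h2, qPoch_q_eq, R2]
  push_cast
  field_simp

lemma R2_nonneg {q β : ℝ} (hq0 : 0 < q) (hq1 : q < 1) (hβ0 : 0 ≤ β) (hβq : β * q ≤ 1) (x : ℝ) (n : ℕ) : 0 ≤ R2 β q x n := by
  have hP : 0 ≤ P2 β q x n := Finset.prod_nonneg fun j _ => by positivity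
  have hM : 0 < M2 q x n := Finset.prod_pos fun j _ => by positivity
  have hD := Dq_pos hq0 hq1 n
  rw [R2]; positivity

lemma R2_le {q β : ℝ} (hq0 : 0 < q) (hq1 : q < 1) (hβ0 : 0 ≤ β) (hβq : β * q ≤ 1) (x : ℝ) (n : ℕ) : R2 β q x n ≤ Cq q := by
  have hD := Dq_pos hq0 hq1 n
  have hM : 0 < M2 q x n := Finset.prod_pos fun j _ => by positivity
  have hPM : P2 β q x n ≤ M2 q x n := by
    apply Finset.prod_le_prod
    · intro j _; positivity
    · intro j _
      have hqj : 0 < q ^ j := pow_pos hq0 j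
      have hqj1 : q ^ j ≤ 1 := pow_le_one₀ hq0.le hq1.le
      have ha : β * q^2 * (q^j)^2 ≤ q * (q^j)^2 := by
        nlinarith [mul_le_mul_of_nonneg_right hβq (mul_nonneg hq0.le (sq_nonneg (q^j)))]
      have hc : q * (q^j)^2 ≤ q * q^j := by
        nlinarith [mul_le_mul_of_nonneg_right hqj1 hqj.le]
      linarith
  calc R2 β q x n ≤ M2 q x n / (M2 q x n * Dq q n) := by
        rw [R2]
        gcongr
      _ = 1 / Dq q n := by field_simp
      _ ≤ Cq q := Dq_inv_le hq0 hq1 n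

lemma R2_tendsto {q β : ℝ} (hq0 : 0 < q) (hq1 : q < 1) (hβ0 : 0 ≤ β) (n : ℕ) :
    Filter.Tendsto (fun x : ℝ => ((R2 β q x n : ℝ) : ℂ)) (𝓝[>] (0:ℝ)) (𝓝 (cc β q n)) := by
  have hD := Dq_pos hq0 hq1 n
  have hM0 : (0:ℝ) < M2 q 0 n := by
    rw [M2]
    exact Finset.prod_pos fun j _ => by positivity
  have hP : Continuous fun x : ℝ => P2 β q x n := by
    apply continuous_finset_prod
    intro j _
    continuity
  have hM : Continuous fun x : ℝ => M2 q x n := by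
    apply continuous_finset_prod
    intro j _
    continuity
  have hval : P2 β q 0 n / (M2 q 0 n * Dq q n)
      = (∏ j ∈ Finset.range n, (β * (q * q^j))) / Dq q n := by
    have hP0 : P2 β q 0 n = (∏ j ∈ Finset.range n, (β * (q * q^j))) * M2 q 0 n := by
      rw [P2, M2, ← Finset.prod_mul_distrib]
      apply Finset.prod_congr rfl
      intro j _
      ring
    rw [hP0]
    field_simp
  have ht : Filter.Tendsto (fun x : ℝ => R2 β q x n) (𝓝 0)
      (𝓝 ((∏ j ∈ Finset.range n, (β * (q * q^j))) / Dq q n)) := by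
    rw [← hval]
    exact (hP.tendsto 0).div ((hM.tendsto 0).mul tendsto_const_nhds)
      (by positivity)
  have := (Complex.continuous_ofReal.tendsto _).comp ht
  rw [cc]
  exact this.mono_left nhdsWithin_le_nhds

lemma cc_norm {q β : ℝ} (hq0 : 0 < q) (hq1 : q < 1) (hβ0 : 0 ≤ β) (hβq : β * q ≤ 1) (n : ℕ) : ‖cc β q n‖ ≤ Cq q := by
  have hD := Dq_pos hq0 hq1 n
  have hn : 0 ≤ (∏ j ∈ Finset.range n, (β * (q * q^j))) :=
    Finset.prod_nonneg fun j _ => by positivity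
  rw [cc, Complex.norm_real, Real.norm_of_nonneg (by positivity)]
  have h1 : (∏ j ∈ Finset.range n, (β * (q * q^j))) ≤ 1 := by
    apply Finset.prod_le_one
    · intro j _; positivity
    · intro j _
      have hqj : 0 < q ^ j := pow_pos hq0 j
      have hqj1 : q ^ j ≤ 1 := pow_le_one₀ hq0.le hq1.le
      nlinarith [mul_le_mul_of_nonneg_right hβq (mul_nonneg hq0.le hqj.le)]
  calc (∏ j ∈ Finset.range n, (β * (q * q^j))) / Dq q n ≤ 1 / Dq q n := by
        gcongr
    _ ≤ Cq q := Dq_inv_le hq0 hq1 n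

lemma cc_mul_pow {q β : ℝ} (n : ℕ) (w : ℂ) :
    cc β q n * w ^ n = c2 q n * (((β*q : ℝ):ℂ) * w) ^ n := by
  have hprod : (∏ j ∈ Finset.range n, (β * (q * q^j)))
      = (β*q)^n * q ^ (∑ j ∈ Finset.range n, j) := by
    calc (∏ j ∈ Finset.range n, (β * (q * q^j)))
        = ∏ j ∈ Finset.range n, ((β * q) * q^j) := by
          apply Finset.prod_congr rfl; intro j _; ring
      _ = (β*q)^n * ∏ j ∈ Finset.range n, q^j := by
          rw [Finset.prod_mul_distrib, Finset.prod_const, Finset.card_range]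
      _ = (β*q)^n * q ^ (∑ j ∈ Finset.range n, j) := by
          rw [Finset.prod_pow_eq_pow_sum]
  rw [cc, c2, hprod, mul_pow]
  push_cast
  ring

theorem phi21_limits_x_to_zero (q β : ℝ) (hq0 : 0 < q) (hq1 : q < 1)
    (hβ0 : 0 ≤ β) (hβ : β ≤ 1 / q) :
    (∀ z : ℂ, 1 < ‖z‖ →
      Filter.Tendsto
        (fun x : ℝ => phi21 (Complex.I * (q : ℂ) * (Real.sqrt β : ℂ) * (x : ℂ))
          (-(Complex.I * (q : ℂ) * (Real.sqrt β : ℂ) * (x : ℂ)))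
          (-((x : ℂ) ^ 2 * (q : ℂ))) (q : ℂ) (1 / z))
        (𝓝[>] (0 : ℝ)) (𝓝 (1 / qPochInf (1 / z) (q : ℂ)))) ∧
    (∀ K : Set ℂ, IsCompact K → K ⊆ {z : ℂ | 1 < ‖z‖} →
      TendstoUniformlyOn
        (fun (x : ℝ) (z : ℂ) => phi21 (Complex.I * (q : ℂ) * (Real.sqrt β : ℂ) * (x : ℂ))
          (-(Complex.I * (q : ℂ) * (Real.sqrt β : ℂ) * (x : ℂ)))
          (-((x : ℂ) ^ 2 * (q : ℂ))) (q : ℂ) (1 / z))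
        (fun z : ℂ => 1 / qPochInf (1 / z) (q : ℂ)) (𝓝[>] (0 : ℝ)) K) ∧
    (∀ z : ℂ, 1 < ‖z‖ →
      Filter.Tendsto
        (fun x : ℝ => phi21 (Complex.I * (q : ℂ) * (Real.sqrt β : ℂ) / (x : ℂ))
          (-(Complex.I * (q : ℂ) * (Real.sqrt β : ℂ) / (x : ℂ)))
          (-((q : ℂ) / (x : ℂ) ^ 2)) (q : ℂ) (1 / z))
        (𝓝[>] (0 : ℝ)) (𝓝 (qPochInf (-((β : ℂ) * (q : ℂ) / z)) (q : ℂ)))) ∧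
    (∀ K : Set ℂ, IsCompact K → K ⊆ {z : ℂ | 1 < ‖z‖} →
      TendstoUniformlyOn
        (fun (x : ℝ) (z : ℂ) => phi21 (Complex.I * (q : ℂ) * (Real.sqrt β : ℂ) / (x : ℂ))
          (-(Complex.I * (q : ℂ) * (Real.sqrt β : ℂ) / (x : ℂ)))
          (-((q : ℂ) / (x : ℂ) ^ 2)) (q : ℂ) (1 / z))
        (fun z : ℂ => qPochInf (-((β : ℂ) * (q : ℂ) / z)) (q : ℂ)) (𝓝[>] (0 : ℝ)) K) := by
  have hβq : β * q ≤ 1 := by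
    have := mul_le_mul_of_nonneg_right hβ hq0.le
    rwa [one_div, inv_mul_cancel₀ hq0.ne'] at this
  set C₁ : ℝ := Real.exp (q / (1 - q)) * Cq q with hC₁
  have hCqpos : (0:ℝ) < Cq q := Cq_pos
  have hC₁0 : 0 ≤ C₁ := by positivity
  have hCq_le_C₁ : Cq q ≤ C₁ := by
    have h1 : (1:ℝ) ≤ Real.exp (q / (1 - q)) := by
      rw [Real.one_le_exp_iff]
      have : (0:ℝ) < 1 - q := by linarith
      positivity
    nlinarith
  -- norm of 1/z
  have hnorm_inv : ∀ z : ℂ, 1 < ‖z‖ → ‖1/z‖ < 1 := by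
    intro z hz
    rw [norm_div, norm_one]
    rw [div_lt_one (by linarith)]
    exact hz
  -- Part 1, uniform
  have hu1 : ∀ K : Set ℂ, IsCompact K → K ⊆ {z : ℂ | 1 < ‖z‖} →
      TendstoUniformlyOn
        (fun (x : ℝ) (z : ℂ) => phi21 (Complex.I * (q : ℂ) * (Real.sqrt β : ℂ) * (x : ℂ))
          (-(Complex.I * (q : ℂ) * (Real.sqrt β : ℂ) * (x : ℂ)))
          (-((x : ℂ) ^ 2 * (q : ℂ))) (q : ℂ) (1 / z))
        (fun z : ℂ => 1 / qPochInf (1 / z) (q : ℂ)) (𝓝[>] (0 : ℝ)) K := by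
    intro K hK hKs
    have key := key_uniform C₁ hC₁0
      (fun (x : ℝ) (n : ℕ) =>
        (qPoch (Complex.I * (q : ℂ) * (Real.sqrt β : ℂ) * (x : ℂ)) (q:ℂ) n *
          qPoch (-(Complex.I * (q : ℂ) * (Real.sqrt β : ℂ) * (x : ℂ))) (q:ℂ) n) /
          (qPoch (-((x : ℂ) ^ 2 * (q : ℂ))) (q:ℂ) n * qPoch (q:ℂ) (q:ℂ) n))
      (c1 q) (fun z : ℂ => 1 / qPochInf (1 / z) (q : ℂ))
      ?hb1 ?hcb1 ?hl1 K hK hKs ?hg1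
    case hb1 =>
      filter_upwards [Ioo_mem_nhdsGT_of_mem (Set.left_mem_Ico.2 one_pos)] with x hx n
      rw [A1_eq hβ0 x n, Complex.norm_real,
        Real.norm_of_nonneg (R1_nonneg hq0 hq1 hβ0 hβq x n)]
      exact R1_le hq0 hq1 hβ0 hβq x (by nlinarith [hx.1, hx.2]) n
    case hcb1 =>
      intro n
      exact (c1_norm hq0 hq1 n).trans hCq_le_C₁
    case hl1 =>
      intro n
      exact (R1_tendsto hq0 hq1 (β := β) n).congr (fun x => (A1_eq hβ0 x n).symm)
    case hg1 =>
      intro z hz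
      show 1 / qPochInf (1 / z) (q:ℂ) = ∑' n, c1 q n * (1/z) ^ n
      rw [← E1_eq hq0 hq1 (hnorm_inv z (hKs hz)), E1]
    exact key
  -- Part 2, uniform
  have hu2 : ∀ K : Set ℂ, IsCompact K → K ⊆ {z : ℂ | 1 < ‖z‖} →
      TendstoUniformlyOn
        (fun (x : ℝ) (z : ℂ) => phi21 (Complex.I * (q : ℂ) * (Real.sqrt β : ℂ) / (x : ℂ))
          (-(Complex.I * (q : ℂ) * (Real.sqrt β : ℂ) / (x : ℂ)))
          (-((q : ℂ) / (x : ℂ) ^ 2)) (q : ℂ) (1 / z))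
        (fun z : ℂ => qPochInf (-((β : ℂ) * (q : ℂ) / z)) (q : ℂ)) (𝓝[>] (0 : ℝ)) K := by
    intro K hK hKs
    have key := key_uniform (Cq q) hCqpos.le
      (fun (x : ℝ) (n : ℕ) =>
        (qPoch (Complex.I * (q : ℂ) * (Real.sqrt β : ℂ) / (x : ℂ)) (q:ℂ) n *
          qPoch (-(Complex.I * (q : ℂ) * (Real.sqrt β : ℂ) / (x : ℂ))) (q:ℂ) n) /
          (qPoch (-((q : ℂ) / (x : ℂ) ^ 2)) (q:ℂ) n * qPoch (q:ℂ) (q:ℂ) n))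
      (cc β q) (fun z : ℂ => qPochInf (-((β : ℂ) * (q : ℂ) / z)) (q : ℂ))
      ?hb2 ?hcb2 ?hl2 K hK hKs ?hg2
    case hb2 =>
      filter_upwards [self_mem_nhdsWithin] with x hx n
      rw [A2_eq hq0 hq1 hβ0 x (ne_of_gt hx) n, Complex.norm_real,
        Real.norm_of_nonneg (R2_nonneg hq0 hq1 hβ0 hβq x n)]
      exact R2_le hq0 hq1 hβ0 hβq x n
    case hcb2 =>
      exact cc_norm hq0 hq1 hβ0 hβq
    case hl2 =>
      intro n
      have heq : ∀ᶠ x : ℝ in 𝓝[>] (0:ℝ),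
          ((R2 β q x n : ℝ) : ℂ) =
          (qPoch (Complex.I * (q : ℂ) * (Real.sqrt β : ℂ) / (x : ℂ)) (q:ℂ) n *
            qPoch (-(Complex.I * (q : ℂ) * (Real.sqrt β : ℂ) / (x : ℂ))) (q:ℂ) n) /
            (qPoch (-((q : ℂ) / (x : ℂ) ^ 2)) (q:ℂ) n * qPoch (q:ℂ) (q:ℂ) n) := by
        filter_upwards [self_mem_nhdsWithin] with x hx
        exact (A2_eq hq0 hq1 hβ0 x (ne_of_gt hx) n).symm
      exact Filter.Tendsto.congr' heq (R2_tendsto hq0 hq1 hβ0 n)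
    case hg2 =>
      intro z hz
      show qPochInf (-((β : ℂ) * (q : ℂ) / z)) (q:ℂ) = ∑' n, cc β q n * (1/z) ^ n
      have hw : ‖(1:ℂ)/z‖ < 1 := hnorm_inv z (hKs hz)
      have hw2 : ‖((β*q : ℝ):ℂ) * (1/z)‖ < 1 := by
        rw [norm_mul, Complex.norm_real, Real.norm_of_nonneg (by positivity)]
        nlinarith [norm_nonneg ((1:ℂ)/z)]
      have harg : -((β : ℂ) * (q : ℂ) / z) = -(((β*q : ℝ):ℂ) * (1/z)) := by
        push_cast
        ring
      rw [harg, ← E2_eq hq0 hq1 hw2, E2]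
      exact tsum_congr fun n => (cc_mul_pow n (1/z)).symm
    exact key
  refine ⟨?_, hu1, ?_, hu2⟩
  · intro z hz
    have := hu1 {z} isCompact_singleton (by
      rw [Set.singleton_subset_iff]; exact hz)
    rwa [tendstoUniformlyOn_singleton_iff_tendsto] at this
  · intro z hz
    have := hu2 {z} isCompact_singleton (by
      rw [Set.singleton_subset_iff]; exact hz)
    rwa [tendstoUniformlyOn_singleton_iff_tendsto] at this

end
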